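/- Let A₂, A₃, B₂, B₃ > 0 and d₂⁰, d₃⁰ > 0 be reals with (B₂/2)·exp(−2d₂⁰) = (B₃/2)·exp(−2d₃⁰) =: v₁⁰, define f_j(t) = (A_j/4)·(2t + sinh(2t)) and d_j(v) = −(1/2)·log(2v/B_j) for j = 2, 3, set ṽ_j⁰ = (A_j/4)·(1 + cosh(2d_j⁰)). Define V on (0, ∞) by V(v₁) = v₁ + f₂(d₂(v₁)) + f₃(d₃⁰ + d₂⁰ − d₂(v₁)) for v₁ ≤ v₁⁰, and V(v₁) = v₁ + f₂(d₂(v₁)) + f₃(d₃(v₁)) for v₁ ≥ v₁⁰. Then V has derivative 1 − ṽ₂⁰/v₁⁰ + ṽ₃⁰/v₁⁰ within (0, v₁⁰] at v₁⁰, and derivative 1 − ṽ₂⁰/v₁⁰ − ṽ₃⁰/v₁⁰ within [v₁⁰, ∞) at v₁⁰. -/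

import Mathlib

private lemma dd_deriv (B v : ℝ) (hB : 0 < B) (hv : 0 < v) :
    HasDerivAt (fun w => -(1 / 2) * Real.log (2 * w / B)) (-(1 / (2 * v))) v := by
  have h1 : HasDerivAt (fun w : ℝ => 2 * w / B) (2 / B) v := by
    simpa using ((hasDerivAt_id v).const_mul 2).div_const B
  have h2 : (2 * v / B) ≠ 0 := by positivity
  have h3 := (Real.hasDerivAt_log h2).comp v h1
  have h4 := h3.const_mul (-(1 / 2) : ℝ)
  refine (h4.congr_deriv ?_)
  field_simp

private lemma f_deriv (A t : ℝ) :
    HasDerivAt (fun s => A / 4 * (2 * s + Real.sinh (2 * s)))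
      (A / 2 * (1 + Real.cosh (2 * t))) t := by
  have h2t : HasDerivAt (fun s : ℝ => 2 * s) 2 t := by
    simpa using (hasDerivAt_id t).const_mul 2
  have hs : HasDerivAt (fun s : ℝ => Real.sinh (2 * s)) (Real.cosh (2 * t) * 2) t :=
    (Real.hasDerivAt_sinh (2 * t)).comp t h2t
  have := ((h2t.add hs).const_mul (A / 4))
  refine (this.congr_deriv ?_)
  ring

/-- Case III of the main theorem: the one-sided derivatives of the total peripheral
volume `V` at `v₁⁰` are `1 − vt₂⁰/v₁⁰ + vt₃⁰/v₁⁰` (within `(0, v₁⁰]`) and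
`1 − vt₂⁰/v₁⁰ − vt₃⁰/v₁⁰` (within `[v₁⁰, ∞)`). -/
theorem caseIII_onesided_derivs (A₂ A₃ B₂ B₃ d₂ d₃ v₁ vt₂ vt₃ : ℝ)
    (hA₂ : 0 < A₂) (hA₃ : 0 < A₃) (hB₂ : 0 < B₂) (hB₃ : 0 < B₃)
    (hd₂ : 0 < d₂) (hd₃ : 0 < d₃)
    (hv₁₂ : v₁ = B₂ / 2 * Real.exp (-2 * d₂))
    (hv₁₃ : v₁ = B₃ / 2 * Real.exp (-2 * d₃))
    (f₂ f₃ dd₂ dd₃ : ℝ → ℝ)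
    (hf₂ : ∀ t, f₂ t = A₂ / 4 * (2 * t + Real.sinh (2 * t)))
    (hf₃ : ∀ t, f₃ t = A₃ / 4 * (2 * t + Real.sinh (2 * t)))
    (hdd₂ : ∀ v, dd₂ v = -(1 / 2) * Real.log (2 * v / B₂))
    (hdd₃ : ∀ v, dd₃ v = -(1 / 2) * Real.log (2 * v / B₃))
    (hvt₂ : vt₂ = A₂ / 4 * (1 + Real.cosh (2 * d₂)))
    (hvt₃ : vt₃ = A₃ / 4 * (1 + Real.cosh (2 * d₃)))
    (V : ℝ → ℝ)
    (hVle : ∀ v, 0 < v → v ≤ v₁ → V v = v + f₂ (dd₂ v) + f₃ (d₃ + d₂ - dd₂ v))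
    (hVge : ∀ v, v₁ ≤ v → V v = v + f₂ (dd₂ v) + f₃ (dd₃ v)) :
    HasDerivWithinAt V (1 - vt₂ / v₁ + vt₃ / v₁) (Set.Ioc 0 v₁) v₁ ∧
    HasDerivWithinAt V (1 - vt₂ / v₁ - vt₃ / v₁) (Set.Ici v₁) v₁ := by
  have hv₁ : 0 < v₁ := by rw [hv₁₂]; positivity
  have hfe₂ : f₂ = fun t => A₂ / 4 * (2 * t + Real.sinh (2 * t)) := funext hf₂
  have hfe₃ : f₃ = fun t => A₃ / 4 * (2 * t + Real.sinh (2 * t)) := funext hf₃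
  have hde₂ : dd₂ = fun v => -(1 / 2) * Real.log (2 * v / B₂) := funext hdd₂
  have hde₃ : dd₃ = fun v => -(1 / 2) * Real.log (2 * v / B₃) := funext hdd₃
  have hval₂ : dd₂ v₁ = d₂ := by
    rw [hdd₂, hv₁₂, show 2 * (B₂ / 2 * Real.exp (-2 * d₂)) / B₂ = Real.exp (-2 * d₂) by
      field_simp, Real.log_exp]
    ring
  have hval₃ : dd₃ v₁ = d₃ := by
    rw [hdd₃, hv₁₃, show 2 * (B₃ / 2 * Real.exp (-2 * d₃)) / B₃ = Real.exp (-2 * d₃) by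
      field_simp, Real.log_exp]
    ring
  have hD₂ : HasDerivAt dd₂ (-(1 / (2 * v₁))) v₁ := by
    rw [hde₂]; exact dd_deriv B₂ v₁ hB₂ hv₁
  have hD₃ : HasDerivAt dd₃ (-(1 / (2 * v₁))) v₁ := by
    rw [hde₃]; exact dd_deriv B₃ v₁ hB₃ hv₁
  have hF₂ : HasDerivAt f₂ (2 * vt₂) d₂ := by
    rw [hfe₂, hvt₂]
    convert f_deriv A₂ d₂ using 1; ring
  have hF₃ : HasDerivAt f₃ (2 * vt₃) d₃ := by
    rw [hfe₃, hvt₃]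
    convert f_deriv A₃ d₃ using 1; ring
  -- composite derivatives
  have hC₂ : HasDerivAt (fun v => f₂ (dd₂ v)) (2 * vt₂ * -(1 / (2 * v₁))) v₁ := by
    have := (hval₂ ▸ hF₂ : HasDerivAt f₂ (2 * vt₂) (dd₂ v₁)).comp v₁ hD₂
    exact this
  have hC₃r : HasDerivAt (fun v => f₃ (dd₃ v)) (2 * vt₃ * -(1 / (2 * v₁))) v₁ := by
    exact (hval₃ ▸ hF₃ : HasDerivAt f₃ (2 * vt₃) (dd₃ v₁)).comp v₁ hD₃
  have hC₃l : HasDerivAt (fun v => f₃ (d₃ + d₂ - dd₂ v)) (2 * vt₃ * (1 / (2 * v₁))) v₁ := by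
    have hinner : HasDerivAt (fun v => d₃ + d₂ - dd₂ v) (1 / (2 * v₁)) v₁ := by
      exact ((hasDerivAt_const v₁ (d₃ + d₂)).sub hD₂).congr_deriv (by ring)
    have hval : d₃ + d₂ - dd₂ v₁ = d₃ := by rw [hval₂]; ring
    have hF₃' : HasDerivAt f₃ (2 * vt₃) (d₃ + d₂ - dd₂ v₁) := by rw [hval]; exact hF₃
    exact hF₃'.comp v₁ hinner
  have hv₁ne : v₁ ≠ 0 := ne_of_gt hv₁
  constructor
  · have hg : HasDerivAt (fun v => v + f₂ (dd₂ v) + f₃ (d₃ + d₂ - dd₂ v))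
        (1 - vt₂ / v₁ + vt₃ / v₁) v₁ := by
      have := ((hasDerivAt_id v₁).add hC₂).add hC₃l
      refine (this.congr_deriv ?_)
      field_simp
      ring
    exact (hg.hasDerivWithinAt).congr (fun y hy => hVle y hy.1 hy.2) (hVle v₁ hv₁ le_rfl)
  · have hg : HasDerivAt (fun v => v + f₂ (dd₂ v) + f₃ (dd₃ v))
        (1 - vt₂ / v₁ - vt₃ / v₁) v₁ := by
      have := ((hasDerivAt_id v₁).add hC₂).add hC₃r
      refine (this.congr_deriv ?_)
      field_simp
      ring
    exact (hg.hasDerivWithinAt).congr (fun y hy => hVge y hy) (hVge v₁ le_rfl)
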